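/- There exists m₀ > 0 such that for every m ≥ m₀ there are constants c₁ > 0 and c₂ > 0 with the following property: for every finite nonempty subset Γ of ℤ, Σ_{π ∈ 𝒫(Γ)} ∏_{γ ∈ π} exp(−(m/(2·√2))·Δ(γ)) ≤ c₁·exp(c₂·|Γ|), where 𝒫(Γ) is the (finite) set of all partitions of Γ into pairwise disjoint nonempty blocks, |Γ| is the cardinality of Γ, and Δ(γ) := max γ − min γ is the diameter of a block γ. -/

import Mathlib

open Finset

namespace Statement17Aux

/-- The weight of a block. -/
noncomputable def w (a : ℝ) (γ : Finset ℤ) : ℝ :=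
  Real.exp (-a * ((γ.max.unbotD 0 - γ.min.untopD 0 : ℤ) : ℝ))

lemma w_nonneg (a : ℝ) (γ : Finset ℤ) : 0 ≤ w a γ := (Real.exp_pos _).le

lemma w_empty (a : ℝ) : w a (∅ : Finset ℤ) = 1 := by
  simp [w]

lemma min_eq_coe_untop' {γ : Finset ℤ} (h : γ.Nonempty) :
    γ.min = ((γ.min.untopD 0 : ℤ) : WithTop ℤ) := by
  obtain ⟨b, hb⟩ := Finset.min_of_nonempty h
  rw [hb]; rfl

lemma untop'_mem {γ : Finset ℤ} (h : γ.Nonempty) : γ.min.untopD 0 ∈ γ :=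
  Finset.mem_of_min (min_eq_coe_untop' h)

lemma max_eq_coe_unbot' {γ : Finset ℤ} (h : γ.Nonempty) :
    γ.max = ((γ.max.unbotD 0 : ℤ) : WithBot ℤ) := by
  obtain ⟨b, hb⟩ := Finset.max_of_nonempty h
  rw [hb]; rfl

lemma unbot'_mem_max {γ : Finset ℤ} (h : γ.Nonempty) : γ.max.unbotD 0 ∈ γ :=
  Finset.mem_of_max (max_eq_coe_unbot' h)

/-- the block of `π` with minimum `x`, or `∅` if there is none. -/
def fb (π : Finset (Finset ℤ)) (x : ℤ) : Finset ℤ :=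
  (π.filter fun γ => γ.min = (x : WithTop ℤ)).sup id

lemma fb_of_mem {π : Finset (Finset ℤ)}
    (hd : ∀ γ₁ ∈ π, ∀ γ₂ ∈ π, γ₁ ≠ γ₂ → Disjoint γ₁ γ₂)
    {γ₀ : Finset ℤ} (hγ₀ : γ₀ ∈ π) {x : ℤ} (hx : γ₀.min = (x : WithTop ℤ)) :
    fb π x = γ₀ := by
  have hfilter : π.filter (fun γ => γ.min = (x : WithTop ℤ)) = {γ₀} := by
    apply Finset.eq_singleton_iff_unique_mem.2
    refine ⟨Finset.mem_filter.2 ⟨hγ₀, hx⟩, ?_⟩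
    intro γ hγ
    rw [Finset.mem_filter] at hγ
    by_contra hne
    have h1 : x ∈ γ := Finset.mem_of_min hγ.2
    have h2 : x ∈ γ₀ := Finset.mem_of_min hx
    exact Finset.disjoint_left.1 (hd γ hγ.1 γ₀ hγ₀ hne) h1 h2
  rw [fb, hfilter, Finset.sup_singleton, id]

lemma fb_cases (π : Finset (Finset ℤ))
    (hd : ∀ γ₁ ∈ π, ∀ γ₂ ∈ π, γ₁ ≠ γ₂ → Disjoint γ₁ γ₂) (x : ℤ) :
    fb π x = ∅ ∨ (fb π x ∈ π ∧ (fb π x).min = (x : WithTop ℤ)) := by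
  by_cases h : ∃ γ ∈ π, γ.min = (x : WithTop ℤ)
  · obtain ⟨γ₀, hγ₀, hx⟩ := h
    rw [fb_of_mem hd hγ₀ hx]
    exact Or.inr ⟨hγ₀, hx⟩
  · left
    push_neg at h
    rw [fb, Finset.filter_eq_empty_iff.2 (fun γ hγ => h γ hγ), Finset.sup_empty]
    rfl

end Statement17Aux

namespace Statement17Aux

lemma prod_fb (a : ℝ) (Γ : Finset ℤ) (π : Finset (Finset ℤ))
    (hne : ∅ ∉ π)
    (hd : ∀ γ₁ ∈ π, ∀ γ₂ ∈ π, γ₁ ≠ γ₂ → Disjoint γ₁ γ₂)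
    (hun : π.biUnion id = Γ) :
    ∏ γ ∈ π, w a γ = ∏ x ∈ Γ, w a (fb π x) := by
  classical
  have hblk : ∀ γ ∈ π, γ.Nonempty := fun γ hγ =>
    Finset.nonempty_iff_ne_empty.2 (fun h => hne (h ▸ hγ))
  have hmem : ∀ γ ∈ π, γ.min.untopD 0 ∈ Γ := by
    intro γ hγ
    rw [← hun]
    exact Finset.mem_biUnion.2 ⟨γ, hγ, untop'_mem (hblk γ hγ)⟩
  have hminj : ∀ γ₁ ∈ π, ∀ γ₂ ∈ π,
      γ₁.min.untopD 0 = γ₂.min.untopD 0 → γ₁ = γ₂ := by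
    intro γ₁ h₁ γ₂ h₂ heq
    by_contra hne12
    exact Finset.disjoint_left.1 (hd γ₁ h₁ γ₂ h₂ hne12)
      (untop'_mem (hblk γ₁ h₁)) (heq ▸ untop'_mem (hblk γ₂ h₂))
  have himg : π.image (fun γ => γ.min.untopD 0) ⊆ Γ := by
    intro x hx; obtain ⟨γ, hγ, rfl⟩ := Finset.mem_image.1 hx; exact hmem γ hγ
  have hout : ∀ x ∈ Γ, x ∉ π.image (fun γ => γ.min.untopD 0) →
      w a (fb π x) = 1 := by
    intro x _ hnx
    rcases fb_cases π hd x with h | ⟨h1, h2⟩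
    · rw [h, w_empty]
    · exact absurd (Finset.mem_image.2 ⟨fb π x, h1, by rw [h2]; rfl⟩) hnx
  rw [← Finset.prod_subset himg hout,
    Finset.prod_image (fun γ h γ' h' => hminj γ h γ' h')]
  apply Finset.prod_congr rfl
  intro γ hγ
  rw [fb_of_mem hd hγ (min_eq_coe_untop' (hblk γ hγ))]

end Statement17Aux

namespace Statement17Aux

lemma exp_neg_le_quarter {a : ℝ} (ha : 2 ≤ a) : Real.exp (-a) ≤ 1 / 4 := by
  have h1 : (2:ℝ) ≤ Real.exp 1 := by
    have := Real.exp_one_gt_d9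
    linarith
  have h4 : (4:ℝ) ≤ Real.exp 2 := by
    have : Real.exp 2 = Real.exp 1 * Real.exp 1 := by
      rw [← Real.exp_add]; norm_num
    nlinarith
  have h2 : Real.exp (-a) ≤ Real.exp (-2) := Real.exp_le_exp.2 (by linarith)
  have h3 : Real.exp (-2) = 1 / Real.exp 2 := by
    rw [Real.exp_neg, one_div]
  rw [h3] at h2
  have hpos : (0:ℝ) < Real.exp 2 := Real.exp_pos 2
  calc Real.exp (-a) ≤ 1 / Real.exp 2 := h2
    _ ≤ 1 / 4 := by apply div_le_div_of_nonneg_left (by norm_num) (by norm_num) h4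

lemma sum_Bx_le {a : ℝ} (ha : 2 ≤ a) (Γ : Finset ℤ) (x : ℤ) :
    ∑ γ ∈ Γ.powerset.filter (fun γ => γ.min = (x : WithTop ℤ)), w a γ ≤ 2 := by
  classical
  set B := Γ.powerset.filter (fun γ => γ.min = (x : WithTop ℤ)) with hB
  rcases B.eq_empty_or_nonempty with hBe | hBne
  · rw [hBe]; simp
  · -- basic facts about members of B
    have hBfact : ∀ γ ∈ B, γ ⊆ Γ ∧ γ.min = (x : WithTop ℤ) := by
      intro γ hγ
      rw [hB, Finset.mem_filter, Finset.mem_powerset] at hγ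
      exact hγ
    have hxmem : ∀ γ ∈ B, x ∈ γ := fun γ hγ =>
      Finset.mem_of_min (hBfact γ hγ).2
    have hΓne : Γ.Nonempty := by
      obtain ⟨γ, hγ⟩ := hBne
      exact ⟨x, (hBfact γ hγ).1 (hxmem γ hγ)⟩
    set N : ℕ := (Γ.max' hΓne - x).toNat with hN
    set d : Finset ℤ → ℕ := fun γ => (γ.max.unbotD 0 - x).toNat with hd
    have key : ∀ γ ∈ B, x ≤ γ.max.unbotD 0 ∧ γ.max.unbotD 0 ≤ Γ.max' hΓne ∧
        w a γ = Real.exp (-a) ^ (d γ) := by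
      intro γ hγ
      have hγne : γ.Nonempty := ⟨x, hxmem γ hγ⟩
      have hmaxmem : γ.max.unbotD 0 ∈ γ := unbot'_mem_max hγne
      have h1 : x ≤ γ.max.unbotD 0 := by
        have h := Finset.le_max (hxmem γ hγ)
        rw [max_eq_coe_unbot' hγne] at h
        exact_mod_cast h
      have h2 : γ.max.unbotD 0 ≤ Γ.max' hΓne :=
        Finset.le_max' Γ _ ((hBfact γ hγ).1 hmaxmem)
      refine ⟨h1, h2, ?_⟩
      have hminx : γ.min.untopD 0 = x := by
        rw [(hBfact γ hγ).2]; rfl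
      have hdd : ((d γ : ℤ)) = γ.max.unbotD 0 - x := by
        simp only [hd]
        rw [Int.toNat_of_nonneg (by omega : (0:ℤ) ≤ γ.max.unbotD 0 - x)]
      rw [w, hminx,
        show (-a * ((γ.max.unbotD 0 - x : ℤ) : ℝ)) = (d γ) * (-a) by
          rw [← hdd]; push_cast; ring,
        Real.exp_nat_mul]
    have hmapsto : ∀ γ ∈ B, d γ ∈ Finset.range (N + 1) := by
      intro γ hγ
      obtain ⟨h1, h2, _⟩ := key γ hγ
      rw [Finset.mem_range]
      have hle : d γ ≤ N := by
        simp only [hd, hN]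
        exact Int.toNat_le_toNat (by omega)
      omega
    rw [← Finset.sum_fiberwise_of_maps_to hmapsto]
    have hcard : ∀ j : ℕ, ((B.filter (fun γ => d γ = j)).card : ℝ) ≤ 2 ^ j := by
      intro j
      have hinj : ∀ γ₁ ∈ B.filter (fun γ => d γ = j), ∀ γ₂ ∈ B.filter (fun γ => d γ = j),
          γ₁.erase x = γ₂.erase x → γ₁ = γ₂ := by
        intro γ₁ h₁ γ₂ h₂ he
        have hx₁ : x ∈ γ₁ := hxmem γ₁ (Finset.mem_filter.1 h₁).1
        have hx₂ : x ∈ γ₂ := hxmem γ₂ (Finset.mem_filter.1 h₂).1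
        rw [← Finset.insert_erase hx₁, he, Finset.insert_erase hx₂]
      have hmaps : ∀ γ ∈ B.filter (fun γ => d γ = j),
          γ.erase x ∈ (Finset.Ioc x (x + (j : ℤ))).powerset := by
        intro γ hγ
        obtain ⟨hγB, hγd⟩ := Finset.mem_filter.1 hγ
        obtain ⟨h1, _, _⟩ := key γ hγB
        have hγne : γ.Nonempty := ⟨x, hxmem γ hγB⟩
        have hmaxval : γ.max.unbotD 0 = x + (j : ℤ) := by
          have : ((d γ : ℤ)) = γ.max.unbotD 0 - x := by
            simp only [hd]
            rw [Int.toNat_of_nonneg (by omega : (0:ℤ) ≤ γ.max.unbotD 0 - x)]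
          rw [hγd] at this
          omega
        rw [Finset.mem_powerset]
        intro y hy
        obtain ⟨hyne, hyγ⟩ := Finset.mem_erase.1 hy
        have hxy : x ≤ y := by
          have h := Finset.min_le hyγ
          rw [(hBfact γ hγB).2] at h
          exact_mod_cast h
        have hym : y ≤ γ.max.unbotD 0 := by
          have h := Finset.le_max hyγ
          rw [max_eq_coe_unbot' hγne] at h
          exact_mod_cast h
        rw [Finset.mem_Ioc]
        constructor
        · omega
        · omega
      have := Finset.card_le_card_of_injOn (fun γ => γ.erase x)
        (fun γ hγ => hmaps γ hγ) (fun γ₁ h₁ γ₂ h₂ he => hinj γ₁ h₁ γ₂ h₂ he)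
      have hc : ((Finset.Ioc x (x + (j : ℤ))).powerset).card = 2 ^ j := by
        rw [Finset.card_powerset, Int.card_Ioc]
        norm_num
      rw [hc] at this
      exact_mod_cast Nat.cast_le.2 this
    have hterm : ∀ j ∈ Finset.range (N + 1),
        ∑ γ ∈ B.filter (fun γ => d γ = j), w a γ ≤ (1 / 2 : ℝ) ^ j := by
      intro j _
      have heach : ∀ γ ∈ B.filter (fun γ => d γ = j), w a γ = Real.exp (-a) ^ j := by
        intro γ hγ
        obtain ⟨hγB, hγd⟩ := Finset.mem_filter.1 hγ
        rw [(key γ hγB).2.2, hγd]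
      rw [Finset.sum_congr rfl heach, Finset.sum_const, nsmul_eq_mul]
      have hexp : (0:ℝ) ≤ Real.exp (-a) := (Real.exp_pos _).le
      calc ((B.filter (fun γ => d γ = j)).card : ℝ) * Real.exp (-a) ^ j
          ≤ 2 ^ j * (1 / 4 : ℝ) ^ j := by
            apply mul_le_mul (hcard j) (pow_le_pow_left₀ hexp (exp_neg_le_quarter ha) j)
              (pow_nonneg hexp j) (by positivity)
        _ = (1 / 2 : ℝ) ^ j := by
            rw [← mul_pow]; norm_num
    calc ∑ j ∈ Finset.range (N + 1), ∑ γ ∈ B.filter (fun γ => d γ = j), w a γ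
        ≤ ∑ j ∈ Finset.range (N + 1), (1 / 2 : ℝ) ^ j := Finset.sum_le_sum hterm
      _ ≤ 2 := sum_geometric_two_le _

end Statement17Aux

namespace Statement17Aux

lemma sum_le_sum_inj {α β : Type*} (s : Finset α) (t : Finset β) (e : α → β)
    (f : α → ℝ) (g : β → ℝ) (hmaps : ∀ x ∈ s, e x ∈ t)
    (hinj : ∀ x ∈ s, ∀ y ∈ s, e x = e y → x = y)
    (hfg : ∀ x ∈ s, f x = g (e x)) (hg : ∀ b ∈ t, 0 ≤ g b) :
    ∑ x ∈ s, f x ≤ ∑ b ∈ t, g b := by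
  classical
  rw [Finset.sum_congr rfl hfg, ← Finset.sum_image hinj]
  apply Finset.sum_le_sum_of_subset_of_nonneg
  · intro b hb
    obtain ⟨x, hx, rfl⟩ := Finset.mem_image.1 hb
    exact hmaps x hx
  · intro b hb _
    exact hg b hb

set_option maxHeartbeats 1000000 in
lemma main {a : ℝ} (ha : 2 ≤ a) (Γ : Finset ℤ) :
    ∑ π ∈ Γ.powerset.powerset.filter (fun π =>
        (∅ ∉ π) ∧ (∀ γ₁ ∈ π, ∀ γ₂ ∈ π, γ₁ ≠ γ₂ → Disjoint γ₁ γ₂) ∧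
          π.biUnion id = Γ),
      ∏ γ ∈ π, w a γ ≤ 1 * Real.exp (2 * Γ.card) := by
  classical
  set P := Γ.powerset.powerset.filter (fun π =>
        (∅ ∉ π) ∧ (∀ γ₁ ∈ π, ∀ γ₂ ∈ π, γ₁ ≠ γ₂ → Disjoint γ₁ γ₂) ∧
          π.biUnion id = Γ) with hP
  set t : ℤ → Finset (Finset ℤ) := fun x =>
    insert ∅ (Γ.powerset.filter fun γ => γ.min = (x : WithTop ℤ)) with ht
  set T := Γ.pi (fun x => t x) with hT
  set i : Finset (Finset ℤ) → (∀ x ∈ Γ, Finset ℤ) := fun π x _ => fb π x with hi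
  have hPmem : ∀ π ∈ P, (∀ γ ∈ π, γ ⊆ Γ) ∧ ∅ ∉ π ∧
      (∀ γ₁ ∈ π, ∀ γ₂ ∈ π, γ₁ ≠ γ₂ → Disjoint γ₁ γ₂) ∧ π.biUnion id = Γ := by
    intro π hπ
    rw [hP, Finset.mem_filter, Finset.mem_powerset] at hπ
    exact ⟨fun γ hγ => Finset.mem_powerset.1 (hπ.1 hγ), hπ.2⟩
  have hkey : ∀ π ∈ P, ∀ γ ∈ π, fb π (γ.min.untopD 0) = γ := by
    intro π hπ γ hγ
    obtain ⟨hsub, hne, hd, hun⟩ := hPmem π hπ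
    have hγne : γ.Nonempty := Finset.nonempty_iff_ne_empty.2 (fun h => hne (h ▸ hγ))
    exact fb_of_mem hd hγ (min_eq_coe_untop' hγne)
  have hxΓ : ∀ π ∈ P, ∀ γ ∈ π, γ.min.untopD 0 ∈ Γ := by
    intro π hπ γ hγ
    obtain ⟨hsub, hne, hd, hun⟩ := hPmem π hπ
    have hγne : γ.Nonempty := Finset.nonempty_iff_ne_empty.2 (fun h => hne (h ▸ hγ))
    exact hsub γ hγ (untop'_mem hγne)
  have hinj : ∀ π₁ ∈ P, ∀ π₂ ∈ P, i π₁ = i π₂ → π₁ = π₂ := by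
    intro π₁ h₁ π₂ h₂ heq
    have hfb : ∀ x ∈ Γ, fb π₁ x = fb π₂ x := fun x hx => congrFun (congrFun heq x) hx
    have hsubrel : ∀ π ∈ P, ∀ π' ∈ P, (∀ x ∈ Γ, fb π x = fb π' x) → π ⊆ π' := by
      intro π hπ π' hπ' hfb' γ hγ
      have hx := hxΓ π hπ γ hγ
      have h1 : fb π' (γ.min.untopD 0) = γ := by rw [← hfb' _ hx, hkey π hπ γ hγ]
      obtain ⟨hsub', hne', hd', hun'⟩ := hPmem π' hπ'
      rcases fb_cases π' hd' (γ.min.untopD 0) with h | ⟨hm, _⟩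
      · exfalso
        rw [h1] at h
        obtain ⟨_, hne0, _, _⟩ := hPmem π hπ
        have hγne : γ.Nonempty :=
          Finset.nonempty_iff_ne_empty.2 (fun hh => hne0 (hh ▸ hγ))
        exact hγne.ne_empty h
      · rw [h1] at hm; exact hm
    exact Finset.Subset.antisymm (hsubrel π₁ h₁ π₂ h₂ hfb)
      (hsubrel π₂ h₂ π₁ h₁ (fun x hx => (hfb x hx).symm))
  have hmaps : ∀ π ∈ P, i π ∈ T := by
    intro π hπ
    obtain ⟨hsub, hne, hd, hun⟩ := hPmem π hπ
    rw [hT, Finset.mem_pi]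
    intro x hx
    rcases fb_cases π hd x with h | ⟨hm, hmin⟩
    · show fb π x ∈ t x
      rw [h, ht]
      exact Finset.mem_insert_self _ _
    · show fb π x ∈ t x
      rw [ht]
      exact Finset.mem_insert_of_mem
        (Finset.mem_filter.2 ⟨Finset.mem_powerset.2 (hsub _ hm), hmin⟩)
  have hmain : ∑ π ∈ P, ∏ γ ∈ π, w a γ
      ≤ ∑ p ∈ T, ∏ x ∈ Γ.attach, w a (p x.1 x.2) := by
    apply sum_le_sum_inj P T i _ _ hmaps hinj
    · intro π hπ
      obtain ⟨hsub, hne, hd, hun⟩ := hPmem π hπ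
      rw [prod_fb a Γ π hne hd hun, ← Finset.prod_attach]
    · intro p _
      exact Finset.prod_nonneg fun x _ => w_nonneg a _
  have hstep4 : ∑ p ∈ T, ∏ x ∈ Γ.attach, w a (p x.1 x.2)
      = ∏ x ∈ Γ, ∑ γ ∈ t x, w a γ :=
    (Finset.prod_sum Γ (fun x => t x) (fun _ γ => w a γ)).symm
  have hfac : ∀ x ∈ Γ, ∑ γ ∈ t x, w a γ ≤ 3 := by
    intro x hx
    rw [ht]
    rw [Finset.sum_insert (by simp [Finset.mem_filter])]
    rw [w_empty]
    linarith [sum_Bx_le ha Γ x]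
  have hfin : ∏ x ∈ Γ, ∑ γ ∈ t x, w a γ ≤ 3 ^ Γ.card := by
    calc ∏ x ∈ Γ, ∑ γ ∈ t x, w a γ ≤ ∏ _x ∈ Γ, (3:ℝ) :=
        Finset.prod_le_prod (fun x _ => Finset.sum_nonneg fun γ _ => w_nonneg a γ) hfac
      _ = 3 ^ Γ.card := by rw [Finset.prod_const]
  have h3 : (3:ℝ) ^ Γ.card ≤ Real.exp (2 * Γ.card) := by
    have h1 : (3:ℝ) ≤ Real.exp 2 := by
      have := Real.add_one_le_exp (2:ℝ); linarith
    calc (3:ℝ) ^ Γ.card ≤ Real.exp 2 ^ Γ.card := pow_le_pow_left₀ (by norm_num) h1 _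
      _ = Real.exp (2 * Γ.card) := by rw [← Real.exp_nat_mul, mul_comm]
  rw [one_mul]
  calc ∑ π ∈ P, ∏ γ ∈ π, w a γ
      ≤ ∑ p ∈ T, ∏ x ∈ Γ.attach, w a (p x.1 x.2) := hmain
    _ = ∏ x ∈ Γ, ∑ γ ∈ t x, w a γ := hstep4
    _ ≤ 3 ^ Γ.card := hfin
    _ ≤ Real.exp (2 * Γ.card) := h3

end Statement17Aux

set_option maxHeartbeats 1000000 in
/-- Combinatorial bound for the one-dimensional cluster expansion: for
sufficiently large mass `m`, the sum over all partitions `π` of a finite set of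
bonds `Γ ⊆ ℤ` of the product over blocks `γ ∈ π` of `exp(−(m/(2√2))·Δ(γ))`
(with `Δ(γ) = max γ − min γ` the diameter of the block) is bounded by
`c₁·exp(c₂·|Γ|)`. -/
theorem statement17 :
    ∃ m₀ > (0 : ℝ), ∀ m : ℝ, m₀ ≤ m → ∃ c₁ > (0 : ℝ), ∃ c₂ > (0 : ℝ),
      ∀ Γ : Finset ℤ, Γ.Nonempty →
        ∑ π ∈ Γ.powerset.powerset.filter (fun π =>
            (∅ ∉ π) ∧ (∀ γ₁ ∈ π, ∀ γ₂ ∈ π, γ₁ ≠ γ₂ → Disjoint γ₁ γ₂) ∧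
              π.biUnion id = Γ),
          ∏ γ ∈ π,
            Real.exp (-(m / (2 * Real.sqrt 2)) *
              ((γ.max.unbotD 0 - γ.min.untopD 0 : ℤ) : ℝ))
        ≤ c₁ * Real.exp (c₂ * Γ.card) := by
  refine ⟨8, by norm_num, ?_⟩
  intro m hm
  refine ⟨1, by norm_num, 2, by norm_num, ?_⟩
  intro Γ _hΓ
  have hsle : Real.sqrt 2 ≤ 1.5 := by
    nlinarith [Real.sq_sqrt (by norm_num : (0:ℝ) ≤ 2), Real.sqrt_nonneg 2]
  have hs2 : (0:ℝ) < Real.sqrt 2 := Real.sqrt_pos.2 (by norm_num)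
  have ha : 2 ≤ m / (2 * Real.sqrt 2) := by
    rw [le_div_iff₀ (by positivity)]
    nlinarith
  simpa only [Statement17Aux.w] using Statement17Aux.main ha Γ
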